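/- Let n be a positive integer divisible by eight, and let d_in, d_out be nonnegative integers with d_in ≤ n/2 − 1 and d_out ≤ n/2. If d_in − d_out ≤ n/4 − 1, then there exists a graph G on n nodes together with a planted bisection V1, V2 whose connectivity parameters are exactly d_in and d_out, such that the planted bisection is NOT the unique minimum-cost bisection of G (the minimum bisection problem does not recover the planted bisection). -/

import Mathlib

noncomputable section
open scoped Classical

/-- The cost of the bisection `(S, Sᶜ)` of the node set of `G`, i.e. the number of
edges of `G` with one endpoint in `S` and the other outside of `S`; each such edge
is counted once, as the ordered pair whose first component lies in `S`. -/
def cutCost {n : ℕ} (G : SimpleGraph (Fin n)) (S : Finset (Fin n)) : ℕ :=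
  ((Finset.univ : Finset (Fin n × Fin n)).filter
    (fun p => G.Adj p.1 p.2 ∧ p.1 ∈ S ∧ p.2 ∉ S)).card

/-- The degree of `v` in the graph `G[S] ∪ G[Sᶜ]`, i.e. the number of neighbors of
`v` lying on the same side of the bisection `(S, Sᶜ)` as `v`. -/
def sameDeg {n : ℕ} (G : SimpleGraph (Fin n)) (S : Finset (Fin n)) (v : Fin n) : ℕ :=
  ((Finset.univ : Finset (Fin n)).filter (fun w => G.Adj v w ∧ (w ∈ S ↔ v ∈ S))).card

/-- The degree of `v` in the graph `G₀` of edges crossing the bisection `(S, Sᶜ)`,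
i.e. the number of neighbors of `v` lying on the other side of the bisection. -/
def crossDeg {n : ℕ} (G : SimpleGraph (Fin n)) (S : Finset (Fin n)) (v : Fin n) : ℕ :=
  ((Finset.univ : Finset (Fin n)).filter (fun w => G.Adj v w ∧ ¬ (w ∈ S ↔ v ∈ S))).card

namespace MBN

/-- "negation mod q" of a set of shifts -/
def negSet (q : ℕ) (T : Finset ℕ) : Finset ℕ := T.image fun d => (q - d) % q

/-- symmetric connection set of size `2*a + odd1` in ℤ/q (q even). -/
def S1set (q a odd1 : ℕ) : Finset ℕ :=
  Finset.Ico 1 (a+1) ∪ Finset.Ico (q-a) q ∪ (if odd1 = 1 then {q/2} else ∅)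

def baseSet (s2 t1 t2 c c' : ℕ) : Finset ℕ :=
  if (c = 0 ∧ c' = 1) ∨ (c = 2 ∧ c' = 3) then Finset.range s2
  else if (c = 0 ∧ c' = 2) ∨ (c = 1 ∧ c' = 3) then Finset.range t2
  else Finset.range t1

def Tf (q a odd1 s2 t1 t2 c c' : ℕ) : Finset ℕ :=
  if c = c' then S1set q a odd1
  else if c < c' then baseSet s2 t1 t2 c c'
  else negSet q (baseSet s2 t1 t2 c' c)

def qshift (q u w : ℕ) : ℕ := (w % q + q - u % q) % q

lemma negneg {q d : ℕ} (hd : d < q) : (q - (q - d) % q) % q = d := by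
  rcases Nat.eq_zero_or_pos d with rfl | hd0
  · simp [Nat.mod_self]
  · have h1 : (q - d) % q = q - d := Nat.mod_eq_of_lt (by omega)
    rw [h1]
    have : q - (q - d) = d := by omega
    rw [this, Nat.mod_eq_of_lt hd]

lemma negSet_mem {q x : ℕ} {T : Finset ℕ} (hx : x < q) (hT : T ⊆ Finset.range q) :
    x ∈ negSet q T ↔ (q - x) % q ∈ T := by
  constructor
  · rintro hm
    rcases Finset.mem_image.1 hm with ⟨d, hd, rfl⟩
    have hdq : d < q := Finset.mem_range.1 (hT hd)
    rwa [negneg hdq]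
  · intro hm
    refine Finset.mem_image.2 ⟨(q - x) % q, hm, ?_⟩
    exact negneg hx

lemma negSet_subset_range {q : ℕ} (hq : 0 < q) (T : Finset ℕ) :
    negSet q T ⊆ Finset.range q := by
  intro x hx
  rcases Finset.mem_image.1 hx with ⟨d, _, rfl⟩
  exact Finset.mem_range.2 (Nat.mod_lt _ hq)

lemma negSet_card {q : ℕ} {T : Finset ℕ} (hT : T ⊆ Finset.range q) :
    (negSet q T).card = T.card := by
  apply Finset.card_image_of_injOn
  intro x hx y hy hxy
  have hx' : x < q := Finset.mem_range.1 (hT hx)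
  have hy' : y < q := Finset.mem_range.1 (hT hy)
  have := congrArg (fun z => (q - z) % q) hxy
  simpa [negneg hx', negneg hy'] using this

lemma S1_mem {q a odd1 d : ℕ} (hq2 : 2 ∣ q) :
    d ∈ S1set q a odd1 ↔ ((1 ≤ d ∧ d ≤ a) ∨ (q - a ≤ d ∧ d < q) ∨ (odd1 = 1 ∧ 2*d = q)) := by
  unfold S1set
  rcases hq2 with ⟨k, hk⟩
  subst hk
  by_cases h1 : odd1 = 1 <;> simp [h1, Finset.mem_Ico] <;> omega

lemma S1_card {q a odd1 : ℕ} (hq2 : 2 ∣ q) (hbound : 2*a + odd1 ≤ q - 1) (hodd : odd1 ≤ 1)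
    (hq : 0 < q) : (S1set q a odd1).card = 2*a + odd1 := by
  classical
  unfold S1set
  rcases hq2 with ⟨k, hk⟩
  have hak : a < k := by omega
  rw [Finset.card_union_of_disjoint, Finset.card_union_of_disjoint]
  · have h1 : (Finset.Ico 1 (a+1)).card = a := by rw [Nat.card_Ico]; omega
    have h2 : (Finset.Ico (q-a) q).card = a := by rw [Nat.card_Ico]; omega
    rw [h1, h2]
    by_cases h : odd1 = 1
    · simp [h]; omega
    · have : odd1 = 0 := by omega
      simp [this]; omega
  · rw [Finset.disjoint_left]
    intro x hx hy
    rw [Finset.mem_Ico] at hx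
    rw [Finset.mem_Ico] at hy
    omega
  · rw [Finset.disjoint_left]
    intro x hx hy
    rw [Finset.mem_union, Finset.mem_Ico, Finset.mem_Ico] at hx
    by_cases h : odd1 = 1 <;> simp [h] at hy
    subst hy
    have : q / 2 = k := by omega
    omega

lemma S1_subset {q a odd1 : ℕ} (hq : 0 < q) (ha : a < q) :
    S1set q a odd1 ⊆ Finset.range q := by
  intro d hd
  unfold S1set at hd
  rw [Finset.mem_union, Finset.mem_union, Finset.mem_Ico, Finset.mem_Ico] at hd
  rcases hd with (h | h) | h
  · exact Finset.mem_range.2 (by omega)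
  · exact Finset.mem_range.2 (by omega)
  · by_cases h1 : odd1 = 1 <;> simp [h1] at h
    subst h
    exact Finset.mem_range.2 (Nat.div_lt_self hq (by omega))

lemma S1_neg {q a odd1 d : ℕ} (hq2 : 2 ∣ q) (hbound : 2*a + odd1 ≤ q - 1)
    (hd : d ∈ S1set q a odd1) : (q - d) % q ∈ S1set q a odd1 := by
  rw [S1_mem hq2] at hd ⊢
  rcases hq2 with ⟨k, hk⟩
  have hdq : d < q := by omega
  have h1 : (q - d) % q = q - d := Nat.mod_eq_of_lt (by omega)
  rw [h1]
  omega

lemma S1_not_zero {q a odd1 : ℕ} (hq2 : 2 ∣ q) (hq : 0 < q) (hbound : 2*a + odd1 ≤ q - 1) :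
    0 ∉ S1set q a odd1 := by
  rw [S1_mem hq2]
  push_neg
  refine ⟨by omega, by omega, ?_⟩
  intro _
  omega


lemma qshift_lt {q u w : ℕ} (hq : 0 < q) : qshift q u w < q := Nat.mod_lt _ hq

lemma qshift_self {q u : ℕ} : qshift q u u = 0 := by
  unfold qshift
  rcases Nat.eq_zero_or_pos q with rfl | hq
  · simp
  · have : u % q < q := Nat.mod_lt _ hq
    have h : u % q + q - u % q = q := by omega
    rw [h, Nat.mod_self]

lemma qshift_rev {q u w : ℕ} (hq : 0 < q) :
    qshift q w u = (q - qshift q u w) % q := by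
  unfold qshift
  have hi : u % q < q := Nat.mod_lt _ hq
  have hj : w % q < q := Nat.mod_lt _ hq
  set i := u % q
  set j := w % q
  rcases le_or_gt i j with hij | hij
  · have h1 : (j + q - i) % q = j - i := by
      have : j + q - i = (j - i) + q := by omega
      rw [this, Nat.add_mod_right, Nat.mod_eq_of_lt (by omega)]
    rw [h1]
    rcases Nat.eq_or_lt_of_le hij with heq | hlt
    · have e1 : q - (j - i) = q := by omega
      have e2 : i + q - j = q := by omega
      rw [e1, e2, Nat.mod_self]
    · have h2 : (i + q - j) % q = q - (j - i) := by
        rw [Nat.mod_eq_of_lt (by omega)]; omega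
      rw [h2, Nat.mod_eq_of_lt (by omega)]
  · have h1 : (j + q - i) % q = j + q - i := Nat.mod_eq_of_lt (by omega)
    rw [h1]
    have h2 : (i + q - j) % q = i - j := by
      have : i + q - j = (i - j) + q := by omega
      rw [this, Nat.add_mod_right, Nat.mod_eq_of_lt (by omega)]
    rw [h2, Nat.mod_eq_of_lt (by omega)]
    omega

lemma modsub {q i d : ℕ} (hi : i < q) (hd : d < q) :
    ((i + d) % q + q - i) % q = d := by
  rcases Nat.lt_or_ge (i + d) q with h | h
  · rw [Nat.mod_eq_of_lt h]
    have : i + d + q - i = d + q := by omega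
    rw [this, Nat.add_mod_right, Nat.mod_eq_of_lt hd]
  · have h1 : (i + d) % q = i + d - q := by
      rw [Nat.mod_eq_sub_mod h, Nat.mod_eq_of_lt (by omega)]
    rw [h1]
    have : i + d - q + q - i = d := by omega
    rw [this, Nat.mod_eq_of_lt hd]

lemma modadd {q i j : ℕ} (hi : i < q) (hj : j < q) :
    (i + (j + q - i) % q) % q = j := by
  rcases le_or_gt i j with hij | hij
  · have h1 : (j + q - i) % q = j - i := by
      have : j + q - i = (j - i) + q := by omega
      rw [this, Nat.add_mod_right, Nat.mod_eq_of_lt (by omega)]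
    rw [h1]
    have : i + (j - i) = j := by omega
    rw [this, Nat.mod_eq_of_lt hj]
  · have h1 : (j + q - i) % q = j + q - i := Nat.mod_eq_of_lt (by omega)
    rw [h1]
    have : i + (j + q - i) = j + q := by omega
    rw [this, Nat.add_mod_right, Nat.mod_eq_of_lt hj]

section Graph

variable {q a odd1 s2 t1 t2 : ℕ}

def adjF (q a odd1 s2 t1 t2 u w : ℕ) : Prop :=
  qshift q u w ∈ Tf q a odd1 s2 t1 t2 (u / q) (w / q)

lemma baseSet_subset (hs2 : s2 ≤ q) (ht1 : t1 ≤ q) (ht2 : t2 ≤ q) (c c' : ℕ) :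
    baseSet s2 t1 t2 c c' ⊆ Finset.range q := by
  unfold baseSet
  split_ifs <;> exact Finset.range_subset_range.2 (by omega)

lemma Tf_subset (hq : 0 < q) (ha : a < q) (hs2 : s2 ≤ q) (ht1 : t1 ≤ q) (ht2 : t2 ≤ q)
    (c c' : ℕ) : Tf q a odd1 s2 t1 t2 c c' ⊆ Finset.range q := by
  unfold Tf
  split_ifs
  · exact S1_subset hq ha
  · exact baseSet_subset hs2 ht1 ht2 _ _
  · exact negSet_subset_range hq _

lemma adjF_symm (hq : 0 < q) (hq2 : 2 ∣ q) (hbound : 2*a + odd1 ≤ q - 1)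
    (hs2 : s2 ≤ q) (ht1 : t1 ≤ q) (ht2 : t2 ≤ q) {u w : ℕ}
    (h : adjF q a odd1 s2 t1 t2 u w) : adjF q a odd1 s2 t1 t2 w u := by
  unfold adjF at h ⊢
  rw [qshift_rev hq]
  set cu := u / q
  set cw := w / q
  unfold Tf at h ⊢
  rcases Nat.lt_trichotomy cu cw with hlt | heq | hgt
  · rw [if_neg (by omega), if_pos hlt] at h
    rw [if_neg (by omega), if_neg (by omega)]
    exact Finset.mem_image.2 ⟨_, h, rfl⟩
  · rw [if_pos heq] at h
    rw [if_pos heq.symm]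
    exact S1_neg hq2 hbound h
  · rw [if_neg (by omega), if_neg (by omega)] at h
    rw [if_neg (by omega), if_pos hgt]
    have hsub := baseSet_subset (q := q) hs2 ht1 ht2 cw cu
    rw [negSet_mem (qshift_lt hq) hsub] at h
    exact h

lemma adjF_irrefl (hq : 0 < q) (hq2 : 2 ∣ q) (hbound : 2*a + odd1 ≤ q - 1) (u : ℕ) :
    ¬ adjF q a odd1 s2 t1 t2 u u := by
  unfold adjF Tf
  rw [if_pos rfl, qshift_self]
  exact S1_not_zero hq2 hq hbound

end Graph

section Counting

lemma modq_simp {q c r : ℕ} (hq : 0 < q) (hr : r < q) : (c*q + r) % q = r := by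
  rw [Nat.mul_comm, Nat.mul_add_mod, Nat.mod_eq_of_lt hr]

lemma divq_simp {q c r : ℕ} (hq : 0 < q) (hr : r < q) : (c*q + r) / q = c := by
  rw [Nat.add_comm, Nat.add_mul_div_right _ _ hq, Nat.div_eq_of_lt hr]; omega

/-- counting vertices of a given quarter at given shifts from a fixed index -/
lemma count_one {n q : ℕ} (hn : n = 4*q) (hq : 0 < q) {i : ℕ} (hi : i < q)
    {c : ℕ} (hc : c < 4) {T : Finset ℕ} (hT : T ⊆ Finset.range q)
    [inst : DecidablePred fun w : Fin n => w.val / q = c ∧ (w.val % q + q - i) % q ∈ T] :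
    ((Finset.univ : Finset (Fin n)).filter
      (fun w => w.val / q = c ∧ (w.val % q + q - i) % q ∈ T)).card = T.card := by
  refine Finset.card_bij' (fun w _ => (w.val % q + q - i) % q)
    (fun d hd => (⟨c*q + (i + d) % q, by
      have h1 : (i + d) % q < q := Nat.mod_lt _ hq
      have h2 : c * q ≤ 3 * q := Nat.mul_le_mul (by omega) (le_refl q)
      omega⟩ : Fin n)) ?_ ?_ ?_ ?_
  · intro w hw
    exact (Finset.mem_filter.1 hw).2.2
  · intro d hd
    refine Finset.mem_filter.2 ⟨Finset.mem_univ _, ?_, ?_⟩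
    · exact divq_simp hq (Nat.mod_lt _ hq)
    · show ((c*q + (i + d) % q) % q + q - i) % q ∈ T
      have hd' : d < q := Finset.mem_range.1 (hT hd)
      rw [modq_simp hq (Nat.mod_lt _ hq), modsub hi hd']
      exact hd
  · intro w hw
    obtain ⟨-, hwc, -⟩ := Finset.mem_filter.1 hw
    apply Fin.ext
    show c*q + (i + (w.val % q + q - i) % q) % q = w.val
    have hj : w.val % q < q := Nat.mod_lt _ hq
    rw [modadd hi hj]
    have h2 : q * (w.val / q) + w.val % q = w.val := Nat.div_add_mod w.val q
    rw [hwc, Nat.mul_comm] at h2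
    exact h2
  · intro d hd
    show ((c*q + (i + d) % q) % q + q - i) % q = d
    have hd' : d < q := Finset.mem_range.1 (hT hd)
    rw [modq_simp hq (Nat.mod_lt _ hq), modsub hi hd']

lemma count_two {n q : ℕ} (hn : n = 4*q) (hq : 0 < q) {i : ℕ} (hi : i < q)
    {c1 c2 : ℕ} (hne : c1 ≠ c2) (hc1 : c1 < 4) (hc2 : c2 < 4)
    {Ta Tb : Finset ℕ} (hTa : Ta ⊆ Finset.range q) (hTb : Tb ⊆ Finset.range q)
    (P : Fin n → Prop) [inst : DecidablePred P]
    (hP : ∀ w : Fin n, P w ↔ ((w.val / q = c1 ∧ (w.val % q + q - i) % q ∈ Ta) ∨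
        (w.val / q = c2 ∧ (w.val % q + q - i) % q ∈ Tb))) :
    ((Finset.univ : Finset (Fin n)).filter P).card = Ta.card + Tb.card := by
  classical
  have h1 : (Finset.univ : Finset (Fin n)).filter P =
      ((Finset.univ : Finset (Fin n)).filter
        (fun w => w.val / q = c1 ∧ (w.val % q + q - i) % q ∈ Ta)) ∪
      ((Finset.univ : Finset (Fin n)).filter
        (fun w => w.val / q = c2 ∧ (w.val % q + q - i) % q ∈ Tb)) := by
    ext w
    simp only [Finset.mem_filter, Finset.mem_union, Finset.mem_univ, true_and]
    exact hP w
  rw [h1, Finset.card_union_of_disjoint, count_one hn hq hi hc1 hTa,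
    count_one hn hq hi hc2 hTb]
  rw [Finset.disjoint_left]
  intro w hw hw'
  exact hne ((Finset.mem_filter.1 hw).2.1.symm ▸ (Finset.mem_filter.1 hw').2.1.symm ▸ rfl)

/-- cardinality of an interval-slice of Fin n -/
lemma card_slice {n lo hi : ℕ} (h : hi ≤ n)
    [inst : DecidablePred fun v : Fin n => lo ≤ v.val ∧ v.val < hi] :
    ((Finset.univ : Finset (Fin n)).filter (fun v => lo ≤ v.val ∧ v.val < hi)).card
      = hi - lo := by
  rw [← Nat.card_Ico lo hi]
  apply Finset.card_bij' (fun v _ => v.val) (fun x hx => (⟨x, by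
    rw [Finset.mem_Ico] at hx; omega⟩ : Fin n)) ?_ ?_ ?_ ?_
  · intro v hv
    obtain ⟨-, h1, h2⟩ := Finset.mem_filter.1 hv
    exact Finset.mem_Ico.2 ⟨h1, h2⟩
  · intro x hx
    rw [Finset.mem_Ico] at hx
    exact Finset.mem_filter.2 ⟨Finset.mem_univ _, hx.1, hx.2⟩
  · intro v _; rfl
  · intro x _; rfl

/-- pair-count as a sum of neighbourhood counts -/
lemma pair_count {n : ℕ} (Q : Fin n → Fin n → Prop)
    [inst1 : DecidablePred fun p : Fin n × Fin n => Q p.1 p.2]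
    [inst2 : ∀ u, DecidablePred (Q u)] :
    ((Finset.univ : Finset (Fin n × Fin n)).filter (fun p => Q p.1 p.2)).card
      = ∑ u : Fin n, ((Finset.univ : Finset (Fin n)).filter (fun w => Q u w)).card := by
  rw [Finset.card_filter, ← Finset.univ_product_univ, Finset.sum_product]
  apply Finset.sum_congr rfl
  intro u _
  rw [Finset.card_filter]

end Counting

section GraphDef

variable {q a odd1 s2 t1 t2 : ℕ}

def graph (n q a odd1 s2 t1 t2 : ℕ) (hq : 0 < q) (hq2 : 2 ∣ q)
    (hbound : 2*a + odd1 ≤ q - 1) (hs2 : s2 ≤ q) (ht1 : t1 ≤ q) (ht2 : t2 ≤ q) :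
    SimpleGraph (Fin n) where
  Adj u w := adjF q a odd1 s2 t1 t2 u.val w.val
  symm := ⟨fun u w h => adjF_symm hq hq2 hbound hs2 ht1 ht2 h⟩
  loopless := ⟨fun (u : Fin n) h => adjF_irrefl hq hq2 hbound u.val h⟩

lemma Tf_diag (c : ℕ) : Tf q a odd1 s2 t1 t2 c c = S1set q a odd1 := by simp [Tf]
lemma Tf_01 : Tf q a odd1 s2 t1 t2 0 1 = Finset.range s2 := by norm_num [Tf, baseSet]
lemma Tf_10 : Tf q a odd1 s2 t1 t2 1 0 = negSet q (Finset.range s2) := by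
  norm_num [Tf, baseSet]
lemma Tf_23 : Tf q a odd1 s2 t1 t2 2 3 = Finset.range s2 := by norm_num [Tf, baseSet]
lemma Tf_32 : Tf q a odd1 s2 t1 t2 3 2 = negSet q (Finset.range s2) := by
  norm_num [Tf, baseSet]
lemma Tf_02 : Tf q a odd1 s2 t1 t2 0 2 = Finset.range t2 := by norm_num [Tf, baseSet]
lemma Tf_20 : Tf q a odd1 s2 t1 t2 2 0 = negSet q (Finset.range t2) := by
  norm_num [Tf, baseSet]
lemma Tf_13 : Tf q a odd1 s2 t1 t2 1 3 = Finset.range t2 := by norm_num [Tf, baseSet]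
lemma Tf_31 : Tf q a odd1 s2 t1 t2 3 1 = negSet q (Finset.range t2) := by
  norm_num [Tf, baseSet]
lemma Tf_03 : Tf q a odd1 s2 t1 t2 0 3 = Finset.range t1 := by norm_num [Tf, baseSet]
lemma Tf_30 : Tf q a odd1 s2 t1 t2 3 0 = negSet q (Finset.range t1) := by
  norm_num [Tf, baseSet]
lemma Tf_12 : Tf q a odd1 s2 t1 t2 1 2 = Finset.range t1 := by norm_num [Tf, baseSet]
lemma Tf_21 : Tf q a odd1 s2 t1 t2 2 1 = negSet q (Finset.range t1) := by
  norm_num [Tf, baseSet]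

lemma negRange_card {q k : ℕ} (hk : k ≤ q) : (negSet q (Finset.range k)).card = k := by
  rw [negSet_card (Finset.range_subset_range.2 hk), Finset.card_range]

/-- generic degree-count: number of neighbours of `v` in quarters `c1`, `c2`. -/
lemma deg_count {n q a odd1 s2 t1 t2 : ℕ} (hn : n = 4*q) (hq : 0 < q) (ha : a < q)
    (hs2 : s2 ≤ q) (ht1 : t1 ≤ q) (ht2 : t2 ≤ q) (v : Fin n) {c1 c2 : ℕ}
    (hne : c1 ≠ c2) (hc1 : c1 < 4) (hc2 : c2 < 4) (P : Fin n → Prop) [inst : DecidablePred P]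
    (hP : ∀ w : Fin n, P w ↔
      (adjF q a odd1 s2 t1 t2 v.val w.val ∧ (w.val / q = c1 ∨ w.val / q = c2))) :
    ((Finset.univ : Finset (Fin n)).filter P).card =
      (Tf q a odd1 s2 t1 t2 (v.val/q) c1).card + (Tf q a odd1 s2 t1 t2 (v.val/q) c2).card := by
  apply count_two hn hq (Nat.mod_lt _ hq) hne hc1 hc2
    (Tf_subset hq ha hs2 ht1 ht2 _ _) (Tf_subset hq ha hs2 ht1 ht2 _ _)
  intro w
  rw [hP w]
  show adjF q a odd1 s2 t1 t2 v.val w.val ∧ _ ↔ _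
  unfold adjF qshift
  constructor
  · rintro ⟨hadj, hc | hc⟩
    · exact Or.inl ⟨hc, by rwa [hc] at hadj⟩
    · exact Or.inr ⟨hc, by rwa [hc] at hadj⟩
  · rintro (⟨hc, hm⟩ | ⟨hc, hm⟩)
    · exact ⟨by rwa [hc], Or.inl hc⟩
    · exact ⟨by rwa [hc], Or.inr hc⟩

end GraphDef

section DegCut

variable {n q a odd1 s2 t1 t2 : ℕ}

def V1f (n q : ℕ) : Finset (Fin n) := Finset.univ.filter (fun v => v.val < 2*q)
def Sf (n q : ℕ) : Finset (Fin n) :=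
  Finset.univ.filter (fun v => q ≤ v.val ∧ v.val < 3*q)

lemma mem_V1f (w : Fin n) : w ∈ V1f n q ↔ w.val < 2*q := by simp [V1f]
lemma mem_Sf (w : Fin n) : w ∈ Sf n q ↔ (q ≤ w.val ∧ w.val < 3*q) := by simp [Sf]

lemma div_lt4 (hn : n = 4*q) (hq : 0 < q) (w : Fin n) : w.val / q < 4 :=
  (Nat.div_lt_iff_lt_mul hq).2 (by omega)

lemma lt2q_iff (hq : 0 < q) (w : Fin n) : w.val < 2*q ↔ w.val / q ≤ 1 := by
  constructor
  · intro h
    have h2 := (Nat.div_lt_iff_lt_mul hq).2 h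
    omega
  · intro h
    exact (Nat.div_lt_iff_lt_mul hq).1 (by omega)

lemma mem_V1f_div (hq : 0 < q) (w : Fin n) : w ∈ V1f n q ↔ w.val / q ≤ 1 :=
  (mem_V1f w).trans (lt2q_iff hq w)

lemma mem_Sf_div (hn : n = 4*q) (hq : 0 < q) (w : Fin n) :
    w ∈ Sf n q ↔ (w.val / q = 1 ∨ w.val / q = 2) := by
  rw [mem_Sf]
  have h4 := div_lt4 hn hq w
  constructor
  · rintro ⟨h1, h2⟩
    have ha : 1 ≤ w.val / q := (Nat.le_div_iff_mul_le hq).2 (by omega)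
    have hb : w.val / q < 3 := (Nat.div_lt_iff_lt_mul hq).2 (by omega)
    omega
  · intro hor
    have ha : 1 ≤ w.val / q := by omega
    have hb : w.val / q < 3 := by omega
    have hc := (Nat.le_div_iff_mul_le hq).1 ha
    have hd := (Nat.div_lt_iff_lt_mul hq).1 hb
    omega

lemma card_V1f (hn : n = 4*q) (hq : 0 < q) : (V1f n q).card = 2*q := by
  have he : V1f n q = Finset.univ.filter (fun v : Fin n => 0 ≤ v.val ∧ v.val < 2*q) := by
    unfold V1f
    apply Finset.filter_congr
    intro x _
    simp
  rw [he, card_slice (by omega)]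
  omega

lemma card_Sf (hn : n = 4*q) (hq : 0 < q) : (Sf n q).card = 2*q := by
  unfold Sf
  rw [card_slice (by omega)]
  omega

variable (hq : 0 < q) (hq2 : 2 ∣ q) (hbound : 2*a + odd1 ≤ q - 1)
  (hs2 : s2 ≤ q) (ht1 : t1 ≤ q) (ht2 : t2 ≤ q)

lemma sameDeg_const (hn : n = 4*q) (hodd : odd1 ≤ 1) (v : Fin n) :
    sameDeg (graph n q a odd1 s2 t1 t2 hq hq2 hbound hs2 ht1 ht2) (V1f n q) v
      = 2*a + odd1 + s2 := by
  have ha : a < q := by omega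
  have hv4 := div_lt4 hn hq v
  unfold sameDeg
  rcases (by omega : ∀ c : ℕ, c < 4 → (c = 0 ∨ c = 1 ∨ c = 2 ∨ c = 3)) _ hv4 with hc|hc|hc|hc
  · refine Eq.trans (deg_count (odd1 := odd1) hn hq ha hs2 ht1 ht2 v (c1 := 0) (c2 := 1) (by norm_num)
      (by norm_num) (by norm_num) _ ?_) ?_
    · intro w
      have hw4 := div_lt4 hn hq w
      rw [mem_V1f_div hq w, mem_V1f_div hq v, hc]
      revert hw4
      generalize w.val / q = cw
      intro hw4
      constructor <;> rintro ⟨h1, h2⟩ <;> exact ⟨h1, by omega⟩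
    · rw [hc, Tf_diag, Tf_01, S1_card hq2 hbound hodd hq, Finset.card_range]
  · refine Eq.trans (deg_count (odd1 := odd1) hn hq ha hs2 ht1 ht2 v (c1 := 1) (c2 := 0) (by norm_num)
      (by norm_num) (by norm_num) _ ?_) ?_
    · intro w
      have hw4 := div_lt4 hn hq w
      rw [mem_V1f_div hq w, mem_V1f_div hq v, hc]
      revert hw4
      generalize w.val / q = cw
      intro hw4
      constructor <;> rintro ⟨h1, h2⟩ <;> exact ⟨h1, by omega⟩
    · rw [hc, Tf_diag, Tf_10, S1_card hq2 hbound hodd hq, negRange_card hs2]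
  · refine Eq.trans (deg_count (odd1 := odd1) hn hq ha hs2 ht1 ht2 v (c1 := 2) (c2 := 3) (by norm_num)
      (by norm_num) (by norm_num) _ ?_) ?_
    · intro w
      have hw4 := div_lt4 hn hq w
      rw [mem_V1f_div hq w, mem_V1f_div hq v, hc]
      revert hw4
      generalize w.val / q = cw
      intro hw4
      constructor <;> rintro ⟨h1, h2⟩ <;> exact ⟨h1, by omega⟩
    · rw [hc, Tf_diag, Tf_23, S1_card hq2 hbound hodd hq, Finset.card_range]
  · refine Eq.trans (deg_count (odd1 := odd1) hn hq ha hs2 ht1 ht2 v (c1 := 3) (c2 := 2) (by norm_num)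
      (by norm_num) (by norm_num) _ ?_) ?_
    · intro w
      have hw4 := div_lt4 hn hq w
      rw [mem_V1f_div hq w, mem_V1f_div hq v, hc]
      revert hw4
      generalize w.val / q = cw
      intro hw4
      constructor <;> rintro ⟨h1, h2⟩ <;> exact ⟨h1, by omega⟩
    · rw [hc, Tf_diag, Tf_32, S1_card hq2 hbound hodd hq, negRange_card hs2]

lemma crossDeg_const (hn : n = 4*q) (hodd : odd1 ≤ 1) (v : Fin n) :
    crossDeg (graph n q a odd1 s2 t1 t2 hq hq2 hbound hs2 ht1 ht2) (V1f n q) v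
      = t1 + t2 := by
  have ha : a < q := by omega
  have hv4 := div_lt4 hn hq v
  unfold crossDeg
  rcases (by omega : ∀ c : ℕ, c < 4 → (c = 0 ∨ c = 1 ∨ c = 2 ∨ c = 3)) _ hv4 with hc|hc|hc|hc
  · refine Eq.trans (deg_count (odd1 := odd1) hn hq ha hs2 ht1 ht2 v (c1 := 3) (c2 := 2) (by norm_num)
      (by norm_num) (by norm_num) _ ?_) ?_
    · intro w
      have hw4 := div_lt4 hn hq w
      rw [mem_V1f_div hq w, mem_V1f_div hq v, hc]
      revert hw4
      generalize w.val / q = cw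
      intro hw4
      constructor <;> rintro ⟨h1, h2⟩ <;> exact ⟨h1, by omega⟩
    · rw [hc, Tf_03, Tf_02, Finset.card_range, Finset.card_range]
      try omega
  · refine Eq.trans (deg_count (odd1 := odd1) hn hq ha hs2 ht1 ht2 v (c1 := 2) (c2 := 3) (by norm_num)
      (by norm_num) (by norm_num) _ ?_) ?_
    · intro w
      have hw4 := div_lt4 hn hq w
      rw [mem_V1f_div hq w, mem_V1f_div hq v, hc]
      revert hw4
      generalize w.val / q = cw
      intro hw4
      constructor <;> rintro ⟨h1, h2⟩ <;> exact ⟨h1, by omega⟩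
    · rw [hc, Tf_12, Tf_13, Finset.card_range, Finset.card_range]
  · refine Eq.trans (deg_count (odd1 := odd1) hn hq ha hs2 ht1 ht2 v (c1 := 1) (c2 := 0) (by norm_num)
      (by norm_num) (by norm_num) _ ?_) ?_
    · intro w
      have hw4 := div_lt4 hn hq w
      rw [mem_V1f_div hq w, mem_V1f_div hq v, hc]
      revert hw4
      generalize w.val / q = cw
      intro hw4
      constructor <;> rintro ⟨h1, h2⟩ <;> exact ⟨h1, by omega⟩
    · rw [hc, Tf_21, Tf_20, negRange_card ht1, negRange_card ht2]
      try omega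
  · refine Eq.trans (deg_count (odd1 := odd1) hn hq ha hs2 ht1 ht2 v (c1 := 0) (c2 := 1) (by norm_num)
      (by norm_num) (by norm_num) _ ?_) ?_
    · intro w
      have hw4 := div_lt4 hn hq w
      rw [mem_V1f_div hq w, mem_V1f_div hq v, hc]
      revert hw4
      generalize w.val / q = cw
      intro hw4
      constructor <;> rintro ⟨h1, h2⟩ <;> exact ⟨h1, by omega⟩
    · rw [hc, Tf_30, Tf_31, negRange_card ht1, negRange_card ht2]
      try omega

lemma cut_V1 (hn : n = 4*q) :
    cutCost (graph n q a odd1 s2 t1 t2 hq hq2 hbound hs2 ht1 ht2) (V1f n q)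
      = 2*q*(t1 + t2) := by
  have ha : a < q := by omega
  unfold cutCost
  refine Eq.trans (pair_count (fun u w =>
    (graph n q a odd1 s2 t1 t2 hq hq2 hbound hs2 ht1 ht2).Adj u w ∧
      u ∈ V1f n q ∧ w ∉ V1f n q)) ?_
  have key : ∀ u : Fin n,
      ∀ inst : DecidablePred fun w : Fin n =>
        (graph n q a odd1 s2 t1 t2 hq hq2 hbound hs2 ht1 ht2).Adj u w ∧
          u ∈ V1f n q ∧ w ∉ V1f n q,
      (@Finset.filter _ _ inst (Finset.univ : Finset (Fin n))).card
        = if u ∈ V1f n q then t1 + t2 else 0 := by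
    intro u inst
    by_cases hu : u ∈ V1f n q
    · rw [if_pos hu]
      have hu4 := div_lt4 hn hq u
      have hcu := (mem_V1f_div hq u).1 hu
      rcases (by omega : ∀ c : ℕ, c ≤ 1 → (c = 0 ∨ c = 1)) _ hcu with hc|hc
      · refine Eq.trans (deg_count (odd1 := odd1) hn hq ha hs2 ht1 ht2 u (c1 := 3) (c2 := 2) (by norm_num)
          (by norm_num) (by norm_num) _ ?_) ?_
        · intro w
          have hw4 := div_lt4 hn hq w
          rw [mem_V1f_div hq w]
          revert hw4
          generalize w.val / q = cw
          intro hw4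
          constructor
          · rintro ⟨h1, h2, h3⟩; exact ⟨h1, by omega⟩
          · rintro ⟨h1, h2⟩; exact ⟨h1, hu, by omega⟩
        · rw [hc, Tf_03, Tf_02, Finset.card_range, Finset.card_range]
          try omega
      · refine Eq.trans (deg_count (odd1 := odd1) hn hq ha hs2 ht1 ht2 u (c1 := 2) (c2 := 3) (by norm_num)
          (by norm_num) (by norm_num) _ ?_) ?_
        · intro w
          have hw4 := div_lt4 hn hq w
          rw [mem_V1f_div hq w]
          revert hw4
          generalize w.val / q = cw
          intro hw4
          constructor
          · rintro ⟨h1, h2, h3⟩; exact ⟨h1, by omega⟩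
          · rintro ⟨h1, h2⟩; exact ⟨h1, hu, by omega⟩
        · rw [hc, Tf_12, Tf_13, Finset.card_range, Finset.card_range]
    · rw [if_neg hu, Finset.card_eq_zero, Finset.filter_eq_empty_iff]
      intro w _
      rintro ⟨-, hu', -⟩
      exact hu hu'
  refine Eq.trans (Finset.sum_congr rfl (fun u _ => key u _)) ?_
  rw [Finset.sum_ite_mem, Finset.univ_inter, Finset.sum_const, card_V1f hn hq, smul_eq_mul]

lemma cut_S (hn : n = 4*q) :
    cutCost (graph n q a odd1 s2 t1 t2 hq hq2 hbound hs2 ht1 ht2) (Sf n q)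
      = 2*q*(s2 + t2) := by
  have ha : a < q := by omega
  unfold cutCost
  refine Eq.trans (pair_count (fun u w =>
    (graph n q a odd1 s2 t1 t2 hq hq2 hbound hs2 ht1 ht2).Adj u w ∧
      u ∈ Sf n q ∧ w ∉ Sf n q)) ?_
  have key : ∀ u : Fin n,
      ∀ inst : DecidablePred fun w : Fin n =>
        (graph n q a odd1 s2 t1 t2 hq hq2 hbound hs2 ht1 ht2).Adj u w ∧
          u ∈ Sf n q ∧ w ∉ Sf n q,
      (@Finset.filter _ _ inst (Finset.univ : Finset (Fin n))).card
        = if u ∈ Sf n q then s2 + t2 else 0 := by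
    intro u inst
    by_cases hu : u ∈ Sf n q
    · rw [if_pos hu]
      have hu4 := div_lt4 hn hq u
      have hcu := (mem_Sf_div hn hq u).1 hu
      rcases hcu with hc|hc
      · refine Eq.trans (deg_count (odd1 := odd1) hn hq ha hs2 ht1 ht2 u (c1 := 0) (c2 := 3) (by norm_num)
          (by norm_num) (by norm_num) _ ?_) ?_
        · intro w
          have hw4 := div_lt4 hn hq w
          rw [mem_Sf_div hn hq w]
          revert hw4
          generalize w.val / q = cw
          intro hw4
          constructor
          · rintro ⟨h1, h2, h3⟩; exact ⟨h1, by omega⟩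
          · rintro ⟨h1, h2⟩; exact ⟨h1, hu, by omega⟩
        · rw [hc, Tf_10, Tf_13, negRange_card hs2, Finset.card_range]
      · refine Eq.trans (deg_count (odd1 := odd1) hn hq ha hs2 ht1 ht2 u (c1 := 0) (c2 := 3) (by norm_num)
          (by norm_num) (by norm_num) _ ?_) ?_
        · intro w
          have hw4 := div_lt4 hn hq w
          rw [mem_Sf_div hn hq w]
          revert hw4
          generalize w.val / q = cw
          intro hw4
          constructor
          · rintro ⟨h1, h2, h3⟩; exact ⟨h1, by omega⟩
          · rintro ⟨h1, h2⟩; exact ⟨h1, hu, by omega⟩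
        · rw [hc, Tf_20, Tf_23, negRange_card ht2, Finset.card_range]
          try omega
    · rw [if_neg hu, Finset.card_eq_zero, Finset.filter_eq_empty_iff]
      intro w _
      rintro ⟨-, hu', -⟩
      exact hu hu'
  refine Eq.trans (Finset.sum_congr rfl (fun u _ => key u _)) ?_
  rw [Finset.sum_ite_mem, Finset.univ_inter, Finset.sum_const, card_Sf hn hq, smul_eq_mul]

end DegCut

end MBN

/-- Let `n` be divisible by 8 and let `d_in ≤ n/2 - 1`,
`d_out ≤ n/2` be nonnegative integers with `d_in - d_out ≤ n/4 - 1`. Then there is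
a graph `G` on `n` nodes together with a planted bisection with connectivity
parameters exactly `d_in` and `d_out` for which the planted bisection is not the
unique minimum-cost bisection. -/
theorem minimum_bisection_nonrecovery (n : ℕ) (h8 : 8 ∣ n)
    (din dout : ℕ) (hdin : din ≤ n / 2 - 1) (hdout : dout ≤ n / 2)
    (h : (din : ℝ) - (dout : ℝ) ≤ (n : ℝ) / 4 - 1) :
    ∃ (G : SimpleGraph (Fin n)) (V1 : Finset (Fin n)),
      V1.card = n / 2 ∧
      IsLeast (Set.range (sameDeg G V1)) din ∧
      IsGreatest (Set.range (crossDeg G V1)) dout ∧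
      ∃ S : Finset (Fin n), S.card = n / 2 ∧ S ≠ V1 ∧ S ≠ V1ᶜ ∧
        cutCost G S ≤ cutCost G V1 := by
  classical
  obtain ⟨t, rfl⟩ := h8
  rcases Nat.eq_zero_or_pos t with rfl | ht
  · exfalso
    have h0 : din = 0 := by omega
    have h1 : dout = 0 := by omega
    rw [h0, h1] at h
    norm_num at h
  set q := 2 * t with hqdef
  have hn : 8 * t = 4 * q := by omega
  have hq : 0 < q := by omega
  have hq2 : 2 ∣ q := ⟨t, rfl⟩
  have hdin' : din ≤ 2*q - 1 := by omega
  have hdout' : dout ≤ 2*q := by omega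
  have hkey : din ≤ dout + (q - 1) := by
    by_contra hcon
    push_neg at hcon
    have h5 : dout + q ≤ din := by omega
    have h6 : ((dout + q : ℕ) : ℝ) ≤ (din : ℝ) := by exact_mod_cast Nat.cast_le.2 h5
    have h7 : ((q : ℕ) : ℝ) = 2 * (t : ℝ) := by rw [hqdef]; push_cast; ring
    push_cast at h6 h
    linarith
  set s1 := min din (q - 1) with hs1def
  set s2 := din - s1 with hs2def
  set t1 := min dout q with ht1def
  set t2 := dout - t1 with ht2def
  set a := s1 / 2 with hadef
  set odd1 := s1 % 2 with hodd1def
  have hbound : 2*a + odd1 ≤ q - 1 := by omega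
  have hodd : odd1 ≤ 1 := by omega
  have hs2 : s2 ≤ q := by omega
  have ht1 : t1 ≤ q := by omega
  have ht2 : t2 ≤ q := by omega
  have hs2t1 : s2 ≤ t1 := by omega
  have hdegsame : 2*a + odd1 + s2 = din := by omega
  have hdegcross : t1 + t2 = dout := by omega
  refine ⟨MBN.graph (8*t) q a odd1 s2 t1 t2 hq hq2 hbound hs2 ht1 ht2,
    MBN.V1f (8*t) q, ?_, ?_, ?_, ?_⟩
  · rw [MBN.card_V1f hn hq]
    omega
  · constructor
    · exact ⟨⟨0, by omega⟩, by
        rw [MBN.sameDeg_const hq hq2 hbound hs2 ht1 ht2 hn hodd]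
        omega⟩
    · rintro x ⟨v, rfl⟩
      rw [MBN.sameDeg_const hq hq2 hbound hs2 ht1 ht2 hn hodd]
      omega
  · constructor
    · exact ⟨⟨0, by omega⟩, by
        rw [MBN.crossDeg_const hq hq2 hbound hs2 ht1 ht2 hn hodd]
        omega⟩
    · rintro x ⟨v, rfl⟩
      rw [MBN.crossDeg_const hq hq2 hbound hs2 ht1 ht2 hn hodd]
      omega
  · refine ⟨MBN.Sf (8*t) q, ?_, ?_, ?_, ?_⟩
    · rw [MBN.card_Sf hn hq]
      omega
    · intro heq
      have h1 : (⟨2*q, by omega⟩ : Fin (8*t)) ∈ MBN.Sf (8*t) q := by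
        rw [MBN.mem_Sf]
        show q ≤ 2*q ∧ 2*q < 3*q
        omega
      rw [heq] at h1
      have h2 := (MBN.mem_V1f _).1 h1
      exact lt_irrefl (2*q) h2
    · intro heq
      have h1 : (⟨q, by omega⟩ : Fin (8*t)) ∈ MBN.Sf (8*t) q := by
        rw [MBN.mem_Sf]
        show q ≤ q ∧ q < 3*q
        omega
      rw [heq, Finset.mem_compl] at h1
      exact h1 ((MBN.mem_V1f _).2 (show q < 2*q by omega))
    · rw [MBN.cut_V1 hq hq2 hbound hs2 ht1 ht2 hn, MBN.cut_S hq hq2 hbound hs2 ht1 ht2 hn]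
      exact Nat.mul_le_mul_left _ (by omega)
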